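/- Let n ≥ 1, let R be a commutative ring, and let a weighted matrix digraph on vertices {0,1,…,n} be given by a finite arc type E with source map s, target map t and weight map w as above. Let A be the n×n matrix over R indexed by {1,…,n} with A_{ii} = Σ_{e : t(e)=i} w(e) and A_{ij} = −Σ_{e : s(e)=i, t(e)=j} w(e) for i ≠ j. Then det(A) = Σ_S ∏_{e∈S} w(e), where the sum runs over all arborescences S of the digraph, i.e. over all subsets S ⊆ E of cardinality n such that every vertex i ∈ {1,…,n} is the target of exactly one arc of S and S contains no directed cycle. -/

import Mathlib

attribute [local instance] Classical.propDecidable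


/-- A directed cycle within the arc set `S`: a nonempty list of arcs `e₁,…,e_r` of `S` with
`t eₖ = s eₖ₊₁` for `k < r` and `t e_r = s e₁`. -/
def HasCycleIn {V E : Type*} (s t : E → V) (S : Finset E) : Prop :=
  ∃ (l : List E) (hl : l ≠ []), (∀ e ∈ l, e ∈ S) ∧
    List.Chain' (fun e f => t e = s f) l ∧ t (l.getLast hl) = s (l.head hl)

/-- An arborescence of the matrix digraph on vertices `{0,…,n}`: a set `S` of `n` arcs such
that every vertex `i ∈ {1,…,n}` is the target of exactly one arc of `S` and `S` contains no
directed cycle. -/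
def IsArbor {E : Type*} (n : ℕ) (s t : E → Fin (n + 1)) (S : Finset E) : Prop :=
  S.card = n ∧ (∀ i : Fin (n + 1), i ≠ 0 → ∃! e, e ∈ S ∧ t e = i) ∧ ¬ HasCycleIn s t S

namespace MatrixTreeAux

open Finset

variable {n : ℕ} {R : Type*} [CommRing R]

lemma rank_lt {q : Fin (n+1) → Fin (n+1)} (hq : ∀ v, ∃ k, q^[k] v = 0)
    {v : Fin (n+1)} (hv : v ≠ 0) :
    Nat.find (hq (q v)) < Nat.find (hq v) := by
  have hpos : 0 < Nat.find (hq v) := by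
    rcases Nat.eq_zero_or_pos (Nat.find (hq v)) with h | h; swap
    · exact h
    · exfalso
      apply hv
      have h0 := Nat.find_spec (hq v)
      rwa [h, Function.iterate_zero_apply] at h0
  have h2 : q^[Nat.find (hq v) - 1] (q v) = 0 := by
    have h0 := Nat.find_spec (hq v)
    rwa [← Nat.sub_add_cancel hpos, Function.iterate_succ_apply] at h0
  calc Nat.find (hq (q v)) ≤ Nat.find (hq v) - 1 := Nat.find_le h2
    _ < Nat.find (hq v) := Nat.sub_lt hpos one_pos

lemma detAux_eq_one (q : Fin (n+1) → Fin (n+1)) (hq : ∀ v, ∃ k, q^[k] v = 0)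
    (M : Matrix (Fin n) (Fin n) R)
    (hM : ∀ x y, M x y = (if x = y then 1 else 0) - (if q x.succ = y.succ then 1 else 0)) :
    M.det = 1 := by
  classical
  set b : Fin n → ℕ := fun x => Nat.find (hq x.succ) with hb
  set σ : Equiv.Perm (Fin n) := Tuple.sort b with hσ
  have hmono : Monotone (b ∘ σ) := Tuple.monotone_sort b
  have hzero : ∀ x y : Fin n, x ≠ y → b x ≤ b y → M x y = 0 := by
    intro x y hxy hle
    rw [hM, if_neg hxy, if_neg, sub_zero]
    intro h
    have : b y < b x := by
      have := rank_lt hq (Fin.succ_ne_zero x) (v := x.succ)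
      rwa [h] at this
    omega
  rw [← Matrix.det_submatrix_equiv_self σ M, Matrix.det_of_lowerTriangular]
  · apply Finset.prod_eq_one
    intro i _
    rw [Matrix.submatrix_apply, hM, if_pos rfl, if_neg, sub_zero]
    intro h
    have := rank_lt hq (Fin.succ_ne_zero (σ i)) (v := (σ i).succ)
    rw [h] at this
    exact absurd this (lt_irrefl _)
  · intro i j hij
    have hij' : (i : Fin n) < j := hij
    apply hzero
    · intro h
      exact absurd (σ.injective h) (ne_of_lt hij')
    · exact hmono (le_of_lt hij')




open Finset

variable {n : ℕ} {R : Type*} [CommRing R]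

lemma exists_periodic (q : Fin (n+1) → Fin (n+1)) (v : Fin (n+1)) (hv : ∀ k, q^[k] v ≠ 0) :
    ∃ u m, 0 < m ∧ q^[m] u = u ∧ ∀ k, q^[k] u ≠ 0 := by
  have key : ∀ a b : ℕ, a < b → q^[a] v = q^[b] v →
      ∃ u m, 0 < m ∧ q^[m] u = u ∧ ∀ k, q^[k] u ≠ 0 := by
    intro a b hab heq
    refine ⟨q^[a] v, b - a, by omega, ?_, fun k => ?_⟩
    · rw [← Function.iterate_add_apply, show b - a + a = b from by omega]
      exact heq.symm
    · rw [← Function.iterate_add_apply]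
      exact hv _
  obtain ⟨a, b, hab, heq⟩ := Fintype.exists_ne_map_eq_of_card_lt
      (fun k : Fin (n+2) => q^[(k : ℕ)] v) (by simp)
  rcases hab.lt_or_gt with h | h
  · exact key a b h heq
  · exact key b a h heq.symm

lemma detAux_eq_zero (q : Fin (n+1) → Fin (n+1)) (u : Fin (n+1)) (m : ℕ)
    (hm : 0 < m) (hqm : q^[m] u = u) (hu : ∀ k, q^[k] u ≠ 0)
    (M : Matrix (Fin n) (Fin n) R)
    (hM : ∀ x y, M x y = (if x = y then 1 else 0) - (if q x.succ = y.succ then 1 else 0)) :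
    M.det = 0 := by
  classical
  have hperiod : ∀ k, q^[k] u = q^[k % m] u := by
    intro k
    conv_lhs => rw [← Nat.mod_add_div k m]
    rw [Function.iterate_add_apply, Function.iterate_mul, Function.iterate_fixed hqm]
  set C' : Finset (Fin (n+1)) := (Finset.range m).image (fun k => q^[k] u) with hC'
  have hmem : ∀ k, q^[k] u ∈ C' := fun k => by
    rw [hperiod k]
    exact Finset.mem_image.2 ⟨k % m, Finset.mem_range.2 (Nat.mod_lt _ hm), rfl⟩
  have hmem' : ∀ x ∈ C', ∃ k, q^[k] u = x := fun x hx => by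
    rcases Finset.mem_image.1 hx with ⟨k, _, hk⟩
    exact ⟨k, hk⟩
  have hne : ∀ x ∈ C', x ≠ 0 := by
    intro x hx
    rcases hmem' x hx with ⟨k, hk⟩
    rw [← hk]; exact hu k
  have hback : ∀ x ∈ C', q^[m-1] (q x) = x := by
    intro x hx
    rcases hmem' x hx with ⟨i, hi⟩
    subst hi
    rw [← Function.iterate_succ_apply' q i u, ← Function.iterate_add_apply,
      show m - 1 + (i + 1) = m + i from by omega, hperiod (m + i), Nat.add_mod_left,
      ← hperiod i]
  have hinj : ∀ x ∈ C', ∀ y ∈ C', q x = q y → x = y := by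
    intro x hx y hy hxy
    rw [← hback x hx, hxy, hback y hy]
  have hqC : ∀ x ∈ C', q x ∈ C' := by
    intro x hx
    rcases hmem' x hx with ⟨i, hi⟩
    rw [← hi, ← Function.iterate_succ_apply' q i u]
    exact hmem _
  have hsurj : ∀ x ∈ C', ∃ y ∈ C', q y = x := by
    intro x hx
    rcases hmem' x hx with ⟨i, hi⟩
    refine ⟨q^[i + (m-1)] u, hmem _, ?_⟩
    rw [← Function.iterate_succ_apply' q _ u, show (i + (m-1)).succ = m + i from by omega,
      hperiod (m + i), Nat.add_mod_left, ← hperiod i, hi]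
  set C : Finset (Fin n) := Finset.univ.filter (fun x => x.succ ∈ C') with hC
  have hCiff : ∀ x : Fin n, x ∈ C ↔ x.succ ∈ C' := by
    intro x
    simp [hC]
  -- row sum over C is zero
  have hrow : ∀ y : Fin n, (∑ x ∈ C, M x) y = 0 := by
    intro y
    erw [Finset.sum_apply]
    have e1 : ∑ x ∈ C, M x y
        = (∑ x ∈ C, (if x = y then (1:R) else 0))
          - ∑ x ∈ C, (if q x.succ = y.succ then (1:R) else 0) := by
      rw [← Finset.sum_sub_distrib]
      exact Finset.sum_congr rfl fun x _ => hM x y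
    rw [e1, Finset.sum_ite_eq' C y (fun _ => (1:R))]
    by_cases hy : y ∈ C
    · rw [if_pos hy]
      have hy' : y.succ ∈ C' := (hCiff y).1 hy
      obtain ⟨v, hv, hqv⟩ := hsurj y.succ hy'
      have hv0 : v ≠ 0 := hne v hv
      set x1 : Fin n := v.pred hv0 with hx1
      have hx1succ : x1.succ = v := Fin.succ_pred v hv0
      have hx1C : x1 ∈ C := (hCiff x1).2 (by rw [hx1succ]; exact hv)
      have : ∑ x ∈ C, (if q x.succ = y.succ then (1:R) else 0)
          = ∑ x ∈ C, (if x = x1 then (1:R) else 0) := by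
        apply Finset.sum_congr rfl
        intro x hx
        apply if_congr _ rfl rfl
        constructor
        · intro h
          have hxv : x.succ = v := by
            apply hinj x.succ ((hCiff x).1 hx) v hv
            rw [h, hqv]
          have : x.succ = x1.succ := by rw [hxv, hx1succ]
          exact Fin.succ_inj.1 this
        · intro h
          rw [h, hx1succ, hqv]
      rw [this, Finset.sum_ite_eq' C x1 (fun _ => (1:R)), if_pos hx1C, sub_self]
    · rw [if_neg hy]
      rw [Finset.sum_eq_zero, sub_zero]
      intro x hx
      rw [if_neg]
      intro h
      apply hy
      rw [hCiff]
      rw [← h]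
      exact hqC _ ((hCiff x).1 hx)
  -- pick x0 and conclude det = 0
  have hu0 : u ≠ 0 := by
    have := hu 0
    rwa [Function.iterate_zero_apply] at this
  have huC : u ∈ C' := by
    have := hmem 0
    rwa [Function.iterate_zero_apply] at this
  set x0 : Fin n := u.pred hu0 with hx0
  have hx0C : x0 ∈ C := (hCiff x0).2 (by rw [Fin.succ_pred]; exact huC)
  have hsplit : M x0 + ∑ x ∈ C.erase x0, M x = 0 := by
    rw [Finset.add_sum_erase C (fun x => M x) hx0C]
    funext y
    exact hrow y
  have hx0row : M x0 = (0:R) • M x0 + ∑ k ∈ C.erase x0, (-1 : R) • M k := by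
    have : M x0 = -∑ x ∈ C.erase x0, M x := by
      rw [eq_neg_iff_add_eq_zero]
      exact hsplit
    rw [this]
    simp [neg_smul, one_smul, Finset.sum_neg_distrib]
    exact (Finset.sum_neg_distrib (f := fun x => M x)).symm
  calc M.det = (M.updateRow x0 ((0:R) • M x0 + ∑ k ∈ C.erase x0, (-1:R) • M k)).det := by
        rw [← hx0row, Matrix.updateRow_eq_self]
    _ = (0:R) • M.det :=
        Matrix.det_updateRow_sum_aux M (C.erase x0) (Finset.notMem_erase _ _) _ 0
    _ = 0 := zero_smul _ _




variable {n : ℕ}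

/-- The parent map on vertices induced by a choice of in-arcs. -/
noncomputable def qmap {E : Type*} (s : E → Fin (n+1)) (r : Fin n → E) :
    Fin (n+1) → Fin (n+1) :=
  fun v => if h : v = 0 then 0 else s (r (v.pred h))

lemma qmap_succ {E : Type*} (s : E → Fin (n+1)) (r : Fin n → E) (j : Fin n) :
    qmap s r j.succ = s (r j) := by
  rw [qmap, dif_neg (Fin.succ_ne_zero j), Fin.pred_succ]

lemma cycle_pred {α : Type*} {P : α → α → Prop} {l : List α} (hl : l ≠ [])
    (hc : List.Chain' P l) (hw : P (l.getLast hl) (l.head hl)) :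
    ∀ e ∈ l, ∃ e' ∈ l, P e' e := by
  intro e he
  obtain ⟨⟨i, hi⟩, rfl⟩ := List.mem_iff_get.1 he
  cases i with
  | zero =>
    refine ⟨l.getLast hl, List.getLast_mem hl, ?_⟩
    have h0 : l.head hl = l.get ⟨0, hi⟩ := by
      rw [List.head_eq_getElem_zero hl, List.get_eq_getElem]
    rw [← h0]
    exact hw
  | succ i' =>
    refine ⟨l.get ⟨i', by omega⟩, List.get_mem _ _, ?_⟩
    have := List.isChain_iff_getElem.1 hc i' (by omega)
    convert this using 2 <;> rw [List.get_eq_getElem]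

lemma no_cycle_of_acyclic {E : Type*} [Fintype E] [DecidableEq E]
    (s t : E → Fin (n+1)) (r : Fin n → E)
    (htr : ∀ j, t (r j) = j.succ) (ht : ∀ e, t e ≠ 0)
    (hAcy : ∀ x, ∃ k, (qmap s r)^[k] x = 0) :
    ¬ ∃ (l : List E) (hl : l ≠ []), (∀ e ∈ l, e ∈ Finset.univ.image r) ∧
      List.Chain' (fun e f => t e = s f) l ∧ t (l.getLast hl) = s (l.head hl) := by
  rintro ⟨l, hl, hmem, hchain, hwrap⟩
  have hq : ∀ e ∈ l, qmap s r (t e) = s e := by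
    intro e he
    rcases Finset.mem_image.1 (hmem e he) with ⟨j, -, hj⟩
    subst hj
    rw [htr j, qmap_succ]
  have hpred : ∀ e ∈ l, ∃ e' ∈ l, t e' = s e := cycle_pred hl hchain hwrap
  have hstay : ∀ k, ∃ e ∈ l, (qmap s r)^[k] (t (l.head hl)) = t e := by
    intro k
    induction k with
    | zero => exact ⟨l.head hl, List.head_mem hl, rfl⟩
    | succ k ih =>
      obtain ⟨e, he, hek⟩ := ih
      obtain ⟨e', he', hte'⟩ := hpred e he
      refine ⟨e', he', ?_⟩
      rw [Function.iterate_succ_apply', hek, hq e he, ← hte']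
  obtain ⟨k, hk⟩ := hAcy (t (l.head hl))
  obtain ⟨e, he, hek⟩ := hstay k
  exact ht e (by rw [← hek, hk])

lemma cycle_of_periodic {E : Type*} (s t : E → Fin (n+1)) (r : Fin n → E)
    (htr : ∀ j, t (r j) = j.succ) {S : Finset E} (hrS : ∀ j, r j ∈ S)
    (u : Fin (n+1)) (m : ℕ) (hm : 0 < m) (hqm : (qmap s r)^[m] u = u)
    (hu : ∀ k, (qmap s r)^[k] u ≠ 0) :
    ∃ (l : List E) (hl : l ≠ []), (∀ e ∈ l, e ∈ S) ∧
      List.Chain' (fun e f => t e = s f) l ∧ t (l.getLast hl) = s (l.head hl) := by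
  set q := qmap s r with hqdef
  set a : ℕ → E := fun k => r ((q^[k] u).pred (hu k)) with ha
  have hta : ∀ k, t (a k) = q^[k] u := fun k => by
    rw [ha]; simp only []; rw [htr, Fin.succ_pred]
  have hsa : ∀ k, s (a k) = q^[k+1] u := by
    intro k
    rw [Function.iterate_succ_apply']
    have : q (q^[k] u) = s (a k) := by
      rw [hqdef, qmap, dif_neg (hu k)]
    rw [this]
  have hl : List.ofFn (fun i : Fin m => a (m - 1 - (i : ℕ))) ≠ [] := by
    rw [Ne, List.ofFn_eq_nil_iff]
    omega
  refine ⟨List.ofFn (fun i : Fin m => a (m - 1 - (i : ℕ))), hl, ?_, ?_, ?_⟩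
  · intro e he
    rw [List.mem_ofFn] at he
    obtain ⟨i, hi⟩ := he
    rw [← hi]
    exact hrS _
  · change List.IsChain _ _
    rw [List.isChain_ofFn]
    intro i hi
    rw [hta, hsa, show m - 1 - (i+1) + 1 = m - 1 - i from by omega]
  · rw [List.getLast_ofFn, List.head_ofFn]
    rw [hta, hsa]
    rw [show m - 1 - (m - 1) = 0 from by omega, show m - 1 - 0 + 1 = m from by omega,
      Function.iterate_zero_apply, hqm]



end MatrixTreeAux

open MatrixTreeAux Finset Matrix

/-- **matrix-tree theorem.** The determinant of the matrix of a weighted matrix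
digraph equals the sum, over all arborescences `S`, of the products of the arc weights of `S`. -/
theorem det_eq_sum_arborescence_weights
    (n : ℕ) (hn : 1 ≤ n) (R : Type*) [CommRing R]
    (E : Type*) [Fintype E] [DecidableEq E]
    (s t : E → Fin (n + 1)) (w : E → R)
    (ht : ∀ e, t e ≠ 0) (hs : ∀ e, s e ≠ t e)
    (A : Matrix (Fin n) (Fin n) R)
    (hAdiag : ∀ i : Fin n, A i i = ∑ e ∈ Finset.univ.filter (fun e => t e = i.succ), w e)
    (hAoff : ∀ i j : Fin n, i ≠ j →
      A i j = -∑ e ∈ Finset.univ.filter (fun e => s e = i.succ ∧ t e = j.succ), w e) :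
    A.det = ∑ S ∈ Finset.univ.filter (IsArbor n s t), ∏ e ∈ S, w e := by
  classical
  set F : Fin n → Finset E := fun j => Finset.univ.filter (fun e => t e = j.succ) with hF
  set v : E → Fin n → R := fun e i =>
    (if t e = i.succ then (1:R) else 0) - (if s e = i.succ then 1 else 0) with hv
  -- columns of A
  have hcol : ∀ j i : Fin n, A i j = (∑ e ∈ F j, w e • v e) i := by
    intro j i
    rw [Finset.sum_apply]
    by_cases hij : i = j
    · subst hij
      rw [hAdiag i]
      apply Finset.sum_congr rfl
      intro e he
      have hte : t e = i.succ := (Finset.mem_filter.1 he).2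
      have hse : s e ≠ i.succ := by rw [← hte]; exact hs e
      rw [Pi.smul_apply, smul_eq_mul, hv]
      simp only []
      rw [if_pos hte, if_neg hse, sub_zero, mul_one]
    · rw [hAoff i j hij]
      have : ∀ e ∈ F j, (w e • v e) i = -(if s e = i.succ then w e else 0) := by
        intro e he
        have hte : t e = j.succ := (Finset.mem_filter.1 he).2
        have htei : t e ≠ i.succ := by
          rw [hte]
          simp only [Ne, Fin.succ_inj]
          exact fun h => hij (h.symm)
        rw [Pi.smul_apply, smul_eq_mul, hv]
        simp only []
        rw [if_neg htei, zero_sub, mul_neg, mul_ite, mul_one, mul_zero]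
      rw [Finset.sum_congr rfl this, Finset.sum_neg_distrib, neg_inj,
        ← Finset.sum_filter]
      apply Finset.sum_congr _ (fun _ _ => rfl)
      rw [hF]
      rw [Finset.filter_filter]
      apply Finset.filter_congr
      intro e _
      simp [and_comm]
  -- expand determinant by multilinearity
  have h1 : A.det = ∑ r ∈ Fintype.piFinset F,
      (∏ j, w (r j)) • (Matrix.of fun x y : Fin n => v (r x) y).det := by
    rw [← Matrix.det_transpose A]
    have hAT : Aᵀ = Matrix.of fun j : Fin n => ∑ e ∈ F j, w e • v e := by
      funext j i
      exact hcol j i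
    rw [hAT]
    have hdet : (Matrix.of fun j : Fin n => ∑ e ∈ F j, w e • v e).det
        = (Matrix.detRowAlternating (R := R) (n := Fin n)).toMultilinearMap
            (fun j : Fin n => ∑ e ∈ F j, w e • v e) := rfl
    rw [hdet, MultilinearMap.map_sum_finset _ (fun _ e => w e • v e) F]
    apply Finset.sum_congr rfl
    intro r _
    have := (Matrix.detRowAlternating (R := R) (n := Fin n)).toMultilinearMap.map_smul_univ
      (fun j => w (r j)) (fun j => v (r j))
    rw [this]
    rfl
  -- identify each matrix with the qmap form
  have hmemF : ∀ r ∈ Fintype.piFinset F, ∀ j : Fin n, t (r j) = j.succ := by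
    intro r hr j
    have := (Fintype.mem_piFinset.1 hr) j
    rw [hF] at this
    exact (Finset.mem_filter.1 this).2
  have hMr : ∀ r, r ∈ Fintype.piFinset F → ∀ x y : Fin n,
      (Matrix.of fun x y : Fin n => v (r x) y) x y
        = (if x = y then (1:R) else 0) - (if (qmap s r) x.succ = y.succ then 1 else 0) := by
    intro r hr x y
    have htr : t (r x) = x.succ := hmemF r hr x
    rw [Matrix.of_apply, hv]
    simp only []
    rw [qmap_succ]
    congr 1
    rw [htr]
    by_cases h : x = y
    · rw [if_pos h, if_pos (by rw [h])]
    · rw [if_neg h, if_neg (by simp only [Ne, Fin.succ_inj]; exact h)]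
  rw [h1]
  set Acy : (Fin n → E) → Prop := fun r => ∀ x, ∃ k, (qmap s r)^[k] x = 0 with hAcydef
  rw [← Finset.sum_filter_add_sum_filter_not (Fintype.piFinset F) Acy]
  have hzero : ∑ r ∈ (Fintype.piFinset F).filter (fun r => ¬ Acy r),
      (∏ j, w (r j)) • (Matrix.of fun x y : Fin n => v (r x) y).det = 0 := by
    apply Finset.sum_eq_zero
    intro r hr
    obtain ⟨hr1, hr2⟩ := Finset.mem_filter.1 hr
    replace hr2 : ¬ ∀ x, ∃ k, (qmap s r)^[k] x = 0 := hr2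
    push_neg at hr2
    obtain ⟨x, hx⟩ := hr2
    obtain ⟨u, m, hm, hqm, hu⟩ := exists_periodic _ x hx
    rw [detAux_eq_zero (qmap s r) u m hm hqm hu _ (hMr r hr1), smul_zero]
  rw [hzero, add_zero]
  have hone : ∀ r ∈ (Fintype.piFinset F).filter Acy,
      (∏ j, w (r j)) • (Matrix.of fun x y : Fin n => v (r x) y).det = ∏ j, w (r j) := by
    intro r hr
    obtain ⟨hr1, hr2⟩ := Finset.mem_filter.1 hr
    rw [detAux_eq_one (qmap s r) hr2 _ (hMr r hr1), smul_eq_mul, mul_one]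
  rw [Finset.sum_congr rfl hone]
  have hinjF : ∀ r ∈ Fintype.piFinset F, Function.Injective r := by
    intro r hr a b hab
    have : a.succ = b.succ := by rw [← hmemF r hr a, ← hmemF r hr b, hab]
    exact Fin.succ_inj.1 this
  apply Finset.sum_bij (i := fun (r : Fin n → E) (_ : r ∈ (Fintype.piFinset F).filter Acy) =>
    Finset.univ.image r)
  · -- maps into arborescences
    intro r hr
    obtain ⟨hr1, hr2⟩ := Finset.mem_filter.1 hr
    rw [Finset.mem_filter]
    refine ⟨Finset.mem_univ _, ?_, ?_, ?_⟩
    · rw [Finset.card_image_of_injective _ (hinjF r hr1), Finset.card_univ, Fintype.card_fin]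
    · intro i hi
      refine ⟨r (i.pred hi), ⟨Finset.mem_image_of_mem r (Finset.mem_univ _),
        by rw [hmemF r hr1, Fin.succ_pred]⟩, ?_⟩
      rintro e ⟨he, hte⟩
      rcases Finset.mem_image.1 he with ⟨j, -, rfl⟩
      obtain rfl : i = j.succ := by rw [← hte]; exact hmemF r hr1 j
      rw [Fin.pred_succ]
    · exact no_cycle_of_acyclic s t r (hmemF r hr1) ht hr2
  · -- injectivity
    intro r1 h1 r2 h2 heq
    funext j
    have h1' := (Finset.mem_filter.1 h1).1
    have h2' := (Finset.mem_filter.1 h2).1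
    have : r1 j ∈ Finset.univ.image r2 := by
      rw [← heq]
      exact Finset.mem_image_of_mem r1 (Finset.mem_univ _)
    rcases Finset.mem_image.1 this with ⟨j', -, hj'⟩
    have : j'.succ = j.succ := by
      rw [← hmemF r2 h2' j', hj', hmemF r1 h1' j]
    rw [← hj', Fin.succ_inj.1 this]
  · -- surjectivity
    intro S hS
    have harbor : IsArbor n s t S := (Finset.mem_filter.1 hS).2
    obtain ⟨hcard, huniq, hnocyc⟩ := harbor
    set r : Fin n → E := fun j => (huniq j.succ (Fin.succ_ne_zero j)).choose with hrdef
    have hspec : ∀ j : Fin n, r j ∈ S ∧ t (r j) = j.succ := by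
      intro j
      exact ((huniq j.succ (Fin.succ_ne_zero j)).choose_spec).1
    have hrF : r ∈ Fintype.piFinset F := by
      apply Fintype.mem_piFinset.2
      intro j
      rw [hF]
      exact Finset.mem_filter.2 ⟨Finset.mem_univ _, (hspec j).2⟩
    have hrAcy : Acy r := by
      show ∀ x, ∃ k, (qmap s r)^[k] x = 0
      by_contra hA
      push_neg at hA
      obtain ⟨x, hx⟩ := hA
      obtain ⟨u, m, hm, hqm, hu⟩ := exists_periodic _ x hx
      exact hnocyc (cycle_of_periodic s t r (fun j => (hspec j).2)
        (fun j => (hspec j).1) u m hm hqm hu)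
    refine ⟨r, Finset.mem_filter.2 ⟨hrF, hrAcy⟩, ?_⟩
    apply Finset.eq_of_subset_of_card_le
    · intro e he
      rcases Finset.mem_image.1 he with ⟨j, -, rfl⟩
      exact (hspec j).1
    · rw [Finset.card_image_of_injective _ (hinjF r hrF), Finset.card_univ, Fintype.card_fin,
        hcard]
  · -- values agree
    intro r hr
    have hr1 := (Finset.mem_filter.1 hr).1
    exact (Finset.prod_image fun a _ b _ h => hinjF r hr1 h).symm
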